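/- Let X be a complete ultrametric space containing at least two points and satisfying: (1) the set of balls of nonzero diameter in X is countable; (2) for every sequence of balls D_k with D_{k+1} ⊊ D_k for all k, the diameters of D_k tend to zero; (3) every ball of nonzero diameter is the union of finitely many of its maximal proper subballs. Consider the simple graph T(X) whose vertices are the balls of nonzero diameter in X together with the balls of zero diameter (singletons) that are maximal proper subballs of a ball of nonzero diameter, and in which two vertices B and C are adjacent if and only if B is a maximal proper subball of C or C is a maximal proper subball of B. Then T(X) is a tree (a connected graph without cycles); moreover every vertex of nonzero diameter has at least two maximal proper subballs. -/

import Mathlib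

/-- A ball in a metric space: a closed ball of nonnegative radius. -/
def IsBall {X : Type*} [MetricSpace X] (B : Set X) : Prop :=
  ∃ (z : X) (r : ℝ), 0 ≤ r ∧ B = Metric.closedBall z r

/-- `B'` is a maximal proper subball of `B`. -/
def IsMaxSubball {X : Type*} [MetricSpace X] (B' B : Set X) : Prop :=
  IsBall B' ∧ B' ⊂ B ∧ ∀ B'' : Set X, IsBall B'' → ¬ (B' ⊂ B'' ∧ B'' ⊂ B)

/-- Vertices of the tree of balls: balls of nonzero diameter, together with
balls of zero diameter that are maximal proper subballs of a ball of nonzero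
diameter. -/
def BallVertex (X : Type*) [MetricSpace X] : Type _ :=
  {B : Set X // (IsBall B ∧ 0 < Metric.diam B) ∨
    (IsBall B ∧ Metric.diam B = 0 ∧
      ∃ C : Set X, IsBall C ∧ 0 < Metric.diam C ∧ IsMaxSubball B C)}

/-- The graph `T(X)` of balls in `X`: two vertices are adjacent iff one is a maximal
proper subball of the other. -/
def ballGraph (X : Type*) [MetricSpace X] : SimpleGraph (BallVertex X) where
  Adj B C := IsMaxSubball B.1 C.1 ∨ IsMaxSubball C.1 B.1
  symm := ⟨fun B C h => h.symm⟩
  loopless := by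
    constructor
    intro B h
    rcases h with h | h <;> exact ssubset_irrefl _ h.2.1

open Metric

section Aux

variable {X : Type*} [MetricSpace X] [IsUltrametricDist X]

lemma ball_nonempty {B : Set X} (hB : IsBall B) : B.Nonempty := by
  obtain ⟨z, r, hr, rfl⟩ := hB
  exact ⟨z, Metric.mem_closedBall_self hr⟩

lemma ball_bounded {B : Set X} (hB : IsBall B) : Bornology.IsBounded B := by
  obtain ⟨z, r, _, rfl⟩ := hB
  exact Metric.isBounded_closedBall

lemma ball_comparable {B C : Set X} (hB : IsBall B) (hC : IsBall C)
    (h : (B ∩ C).Nonempty) : B ⊆ C ∨ C ⊆ B := by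
  obtain ⟨z, r, _, rfl⟩ := hB
  obtain ⟨w, s, _, rfl⟩ := hC
  rcases IsUltrametricDist.closedBall_subset_trichotomy z w r s with h1 | h1 | h1
  · exact Or.inl h1
  · exact Or.inr h1
  · refine absurd h ?_
    rw [Set.disjoint_iff_inter_eq_empty.mp h1]
    exact Set.not_nonempty_empty

lemma diam_ball_le {z : X} {r : ℝ} (hr : 0 ≤ r) :
    Metric.diam (Metric.closedBall z r) ≤ r := by
  refine Metric.diam_le_of_forall_dist_le hr fun x hx y hy => ?_
  refine (dist_triangle_max x z y).trans (max_le ?_ ?_)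
  · exact hx
  · rw [dist_comm]; exact hy

lemma diam_lt_of_ssubset {B C : Set X} (hB : IsBall B) (hC : IsBall C) (h : B ⊂ C) :
    Metric.diam B < Metric.diam C := by
  obtain ⟨z, r, hr, rfl⟩ := hB
  obtain ⟨x, hxC, hxB⟩ := Set.exists_of_ssubset h
  have hzC : z ∈ C := h.1 (Metric.mem_closedBall_self hr)
  have hxr : r < dist x z := by
    by_contra hle
    exact hxB (Metric.mem_closedBall.mpr (not_lt.mp hle))
  calc Metric.diam (Metric.closedBall z r) ≤ r := diam_ball_le hr
    _ < dist x z := hxr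
    _ ≤ Metric.diam C := Metric.dist_le_diam_of_mem (ball_bounded hC) hxC hzC

lemma diam_pos_of_ssubset {B C : Set X} (hB : IsBall B) (hC : IsBall C) (h : B ⊂ C) :
    0 < Metric.diam C :=
  lt_of_le_of_lt Metric.diam_nonneg (diam_lt_of_ssubset hB hC h)

lemma parent_unique {B C C' : Set X} (hC : IsBall C) (hC' : IsBall C')
    (h1 : IsMaxSubball B C) (h2 : IsMaxSubball B C') : C = C' := by
  have hne : (C ∩ C').Nonempty :=
    (ball_nonempty h1.1).mono (Set.subset_inter h1.2.1.1 h2.2.1.1)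
  by_cases heq : C = C'
  · exact heq
  rcases ball_comparable hC hC' hne with h | h
  · exact absurd ⟨h1.2.1, Set.ssubset_iff_subset_ne.mpr ⟨h, heq⟩⟩ (h2.2.2 C hC)
  · exact absurd ⟨h2.2.1, Set.ssubset_iff_subset_ne.mpr ⟨h, Ne.symm heq⟩⟩ (h1.2.2 C' hC')

lemma vertex_ball (u : BallVertex X) : IsBall u.1 :=
  u.2.elim (·.1) (·.1)

/-- lower bound on the diameter of balls properly containing a vertex ball -/
lemma vertex_lb (u : BallVertex X) :
    ∃ δ > (0:ℝ), ∀ E : Set X, IsBall E → u.1 ⊂ E → δ ≤ Metric.diam E := by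
  rcases u.2 with ⟨hB, hd⟩ | ⟨hB, _, C, hC, hCd, hmax⟩
  · exact ⟨Metric.diam u.1, hd, fun E hE hBE => Metric.diam_mono hBE.1 (ball_bounded hE)⟩
  · refine ⟨Metric.diam C, hCd, fun E hE hBE => ?_⟩
    have hCE : C ⊆ E := by
      obtain ⟨z, hz⟩ := ball_nonempty hB
      rcases ball_comparable hC hE ⟨z, hmax.2.1.1 hz, hBE.1 hz⟩ with h | h
      · exact h
      · by_cases heq : E = C
        · exact heq.symm.subset
        · exact absurd ⟨hBE, Set.ssubset_iff_subset_ne.mpr ⟨h, heq⟩⟩ (hmax.2.2 E hE)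
    exact Metric.diam_mono hCE (ball_bounded hE)

/-- The relation of being a ball strictly above the ball of `u` and strictly below. -/
def relAbove (u : BallVertex X) : Set X → Set X → Prop :=
  fun A A' => (IsBall A ∧ u.1 ⊂ A) ∧ A ⊂ A'

lemma wf_above
    (h2 : ∀ D : ℕ → Set X, (∀ k, IsBall (D k)) → (∀ k, D (k + 1) ⊂ D k) →
      Filter.Tendsto (fun k => Metric.diam (D k)) Filter.atTop (nhds 0))
    (u : BallVertex X) :
    WellFounded (relAbove u) := by
  obtain ⟨δ, hδ, hlb⟩ := vertex_lb u
  haveI : IsStrictOrder (Set X) (relAbove u) :=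
    { irrefl := fun A h => ssubset_irrefl A h.2
      trans := fun A B C hAB hBC => ⟨hAB.1, hAB.2.trans hBC.2⟩ }
  rw [RelEmbedding.wellFounded_iff_isEmpty]
  constructor
  intro f
  have hdec : ∀ n : ℕ, relAbove u (f (n + 1)) (f n) :=
    fun n => f.map_rel_iff.mpr (Nat.lt_succ_self n)
  have hten := h2 (fun k => f (k + 1)) (fun k => (hdec k).1.1)
    (fun k => (hdec (k + 1)).2)
  obtain ⟨k, hk⟩ := (hten.eventually (gt_mem_nhds hδ)).exists
  exact absurd (hlb _ (hdec k).1.1 (hdec k).1.2) (not_le.mpr hk)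

lemma reach_up
    (h2 : ∀ D : ℕ → Set X, (∀ k, IsBall (D k)) → (∀ k, D (k + 1) ⊂ D k) →
      Filter.Tendsto (fun k => Metric.diam (D k)) Filter.atTop (nhds 0))
    (h3 : ∀ B : Set X, IsBall B → 0 < Metric.diam B →
      ∃ F : Finset (Set X), (∀ C ∈ F, IsMaxSubball C B) ∧ B = ⋃ C ∈ F, C)
    (u : BallVertex X) (D : Set X) (hD : IsBall D) (hsub : u.1 ⊂ D)
    (v : BallVertex X) (hv : v.1 = D) : (ballGraph X).Reachable u v := by
  have hwf := wf_above h2 u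
  have main : ∀ A : Set X, IsBall A → u.1 ⊂ A →
      ∀ v : BallVertex X, v.1 = A → (ballGraph X).Reachable u v := by
    intro A
    induction A using WellFounded.induction hwf with
    | _ A IH =>
      intro hEball hEsub v hv
      have hEpos : 0 < Metric.diam A := diam_pos_of_ssubset (vertex_ball u) hEball hEsub
      obtain ⟨F, hF, hcov⟩ := h3 A hEball hEpos
      obtain ⟨z, hz⟩ := ball_nonempty (vertex_ball u)
      have hzE : z ∈ A := hEsub.1 hz
      rw [hcov] at hzE
      obtain ⟨C, hCF, hzC⟩ := Set.mem_iUnion₂.mp hzE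
      have hCmax := hF C hCF
      have hCball : IsBall C := hCmax.1
      rcases ball_comparable (vertex_ball u) hCball ⟨z, hz, hzC⟩ with h | h
      · by_cases heq : u.1 = C
        · -- u is a maximal subball of A = v.1
          have : IsMaxSubball u.1 v.1 := by rw [hv, heq]; exact hCmax
          exact (SimpleGraph.Adj.reachable (Or.inl this : (ballGraph X).Adj u v))
        · have hssub : u.1 ⊂ C := Set.ssubset_iff_subset_ne.mpr ⟨h, heq⟩
          have hCE : C ⊂ A := hCmax.2.1
          have hCpos : 0 < Metric.diam C := diam_pos_of_ssubset (vertex_ball u) hCball hssub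
          have hreach : (ballGraph X).Reachable u ⟨C, Or.inl ⟨hCball, hCpos⟩⟩ :=
            IH C ⟨⟨hCball, hssub⟩, hCE⟩ hCball hssub _ rfl
          refine hreach.trans (SimpleGraph.Adj.reachable ?_)
          exact Or.inl (by simpa [hv] using hCmax)
      · -- C ⊆ u.1
        by_cases heq : C = u.1
        · have : IsMaxSubball u.1 v.1 := by rw [hv, ← heq]; exact hCmax
          exact (SimpleGraph.Adj.reachable (Or.inl this : (ballGraph X).Adj u v))
        · exact absurd ⟨Set.ssubset_iff_subset_ne.mpr ⟨h, heq⟩, hEsub⟩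
            (hCmax.2.2 u.1 (vertex_ball u))
  exact main D hD hsub v hv

end Aux

/-- For a complete ultrametric space with at least two points, satisfying the
countability, decreasing-diameter and finite-branching conditions, the graph of
balls `T(X)` is a tree, and every ball of nonzero diameter has at least two
maximal proper subballs. -/
theorem stmt_4 {X : Type*} [MetricSpace X] [CompleteSpace X] [Nontrivial X]
    (hultra : ∀ x y z : X, dist x y ≤ max (dist x z) (dist z y))
    (h1 : {B : Set X | IsBall B ∧ 0 < Metric.diam B}.Countable)
    (h2 : ∀ D : ℕ → Set X, (∀ k, IsBall (D k)) → (∀ k, D (k + 1) ⊂ D k) →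
      Filter.Tendsto (fun k => Metric.diam (D k)) Filter.atTop (nhds 0))
    (h3 : ∀ B : Set X, IsBall B → 0 < Metric.diam B →
      ∃ F : Finset (Set X), (∀ C ∈ F, IsMaxSubball C B) ∧ B = ⋃ C ∈ F, C) :
    (ballGraph X).IsTree ∧
    ∀ B : Set X, IsBall B → 0 < Metric.diam B →
      ∃ C₁ C₂ : Set X, C₁ ≠ C₂ ∧ IsMaxSubball C₁ B ∧ IsMaxSubball C₂ B := by
  haveI : IsUltrametricDist X := ⟨fun x y z => hultra x z y⟩
  classical
  -- Part 2: at least two maximal subballs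
  have part2 : ∀ B : Set X, IsBall B → 0 < Metric.diam B →
      ∃ C₁ C₂ : Set X, C₁ ≠ C₂ ∧ IsMaxSubball C₁ B ∧ IsMaxSubball C₂ B := by
    intro B hB hBpos
    obtain ⟨F, hF, hcov⟩ := h3 B hB hBpos
    obtain ⟨z, hz⟩ := ball_nonempty hB
    have hzU : z ∈ ⋃ C ∈ F, C := hcov ▸ hz
    obtain ⟨C₁, hC₁F, hzC₁⟩ := Set.mem_iUnion₂.mp hzU
    obtain ⟨x, hxB, hxC₁⟩ := Set.exists_of_ssubset (hF C₁ hC₁F).2.1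
    have hxU : x ∈ ⋃ C ∈ F, C := hcov ▸ hxB
    obtain ⟨C₂, hC₂F, hxC₂⟩ := Set.mem_iUnion₂.mp hxU
    exact ⟨C₁, C₂, fun h => hxC₁ (h ▸ hxC₂), hF C₁ hC₁F, hF C₂ hC₂F⟩
  refine ⟨⟨?_, ?_⟩, part2⟩
  · -- Connected
    rw [SimpleGraph.connected_iff]
    constructor
    · -- Preconnected
      intro u v
      have hBu := vertex_ball u
      have hBv := vertex_ball v
      by_cases hint : (u.1 ∩ v.1).Nonempty
      · rcases ball_comparable hBu hBv hint with hs | hs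
        · by_cases heq : u.1 = v.1
          · exact (Subtype.ext heq : u = v) ▸ SimpleGraph.Reachable.refl u
          · exact reach_up h2 h3 u v.1 hBv (Set.ssubset_iff_subset_ne.mpr ⟨hs, heq⟩) v rfl
        · by_cases heq : v.1 = u.1
          · exact (Subtype.ext heq : v = u) ▸ SimpleGraph.Reachable.refl v
          · exact (reach_up h2 h3 v u.1 hBu (Set.ssubset_iff_subset_ne.mpr ⟨hs, heq⟩) u rfl).symm
      · -- disjoint balls: go through a common larger ball
        obtain ⟨z, r, hr, hBe⟩ := hBu
        obtain ⟨w, s, hs, hCe⟩ := hBv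
        set R : ℝ := max (max r s) (dist z w) with hR
        have hR0 : 0 ≤ R := le_trans (le_trans hr (le_max_left r s)) (le_max_left _ _)
        have hDball : IsBall (Metric.closedBall z R) := ⟨z, R, hR0, rfl⟩
        have hsubu : u.1 ⊆ Metric.closedBall z R := by
          rw [hBe]
          exact Metric.closedBall_subset_closedBall
            (le_trans (le_max_left r s) (le_max_left _ _))
        have hw : w ∈ Metric.closedBall z R := by
          rw [Metric.mem_closedBall, dist_comm]
          exact le_max_right _ _
        have hsubv : v.1 ⊆ Metric.closedBall z R := by
          rw [hCe, IsUltrametricDist.closedBall_eq_of_mem hw]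
          exact Metric.closedBall_subset_closedBall
            (le_trans (le_max_right r s) (le_max_left _ _))
        obtain ⟨y, hy⟩ := ball_nonempty (vertex_ball v)
        obtain ⟨y', hy'⟩ := ball_nonempty (vertex_ball u)
        have hyu : y ∉ u.1 := fun hyu => hint ⟨y, hyu, hy⟩
        have hy'v : y' ∉ v.1 := fun hyv => hint ⟨y', hy', hyv⟩
        have hssu : u.1 ⊂ Metric.closedBall z R :=
          ⟨hsubu, fun hDu => hyu (hDu (hsubv hy))⟩
        have hssv : v.1 ⊂ Metric.closedBall z R :=
          ⟨hsubv, fun hDv => hy'v (hDv (hsubu hy'))⟩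
        exact (reach_up h2 h3 u (Metric.closedBall z R) hDball hssu
            ⟨_, Or.inl ⟨hDball, diam_pos_of_ssubset (vertex_ball u) hDball hssu⟩⟩ rfl).trans
          (reach_up h2 h3 v (Metric.closedBall z R) hDball hssv
            ⟨_, Or.inl ⟨hDball, diam_pos_of_ssubset (vertex_ball u) hDball hssu⟩⟩ rfl).symm
    · -- Nonempty
      obtain ⟨x, y, hxy⟩ := exists_pair_ne X
      have hball : IsBall (Metric.closedBall x (dist x y)) := ⟨x, dist x y, dist_nonneg, rfl⟩
      have hypos : 0 < Metric.diam (Metric.closedBall x (dist x y)) := by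
        have hx : x ∈ Metric.closedBall x (dist x y) := Metric.mem_closedBall_self dist_nonneg
        have hy : y ∈ Metric.closedBall x (dist x y) := by
          rw [Metric.mem_closedBall, dist_comm]
        calc (0:ℝ) < dist x y := dist_pos.mpr hxy
          _ ≤ Metric.diam _ := Metric.dist_le_diam_of_mem (ball_bounded hball) hx hy
      exact ⟨⟨_, Or.inl ⟨hball, hypos⟩⟩⟩
  · -- Acyclic
    intro v c hc
    obtain ⟨m, hmF, hmin⟩ := Finset.exists_min_image c.support.toFinset
      (fun x => Metric.diam x.1) ⟨v, List.mem_toFinset.mpr c.start_mem_support⟩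
    have hm : m ∈ c.support := List.mem_toFinset.mp hmF
    have hmin' : ∀ y ∈ c.support, Metric.diam m.1 ≤ Metric.diam y.1 :=
      fun y hy => hmin y (List.mem_toFinset.mpr hy)
    set c' := c.rotate m hm with hc'def
    have hc'c : c'.IsCycle := hc.rotate hm
    have hsupp : ∀ y ∈ c'.support, Metric.diam m.1 ≤ Metric.diam y.1 := by
      intro y hy
      rw [c'.support_eq_cons] at hy
      rcases List.mem_cons.mp hy with rfl | hy
      · exact le_refl _
      · have := (SimpleGraph.Walk.support_rotate c m hm).mem_iff.mp hy
        exact hmin' y (List.mem_of_mem_tail this)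
    obtain ⟨w, hadj1, q, hq⟩ := SimpleGraph.Walk.not_nil_iff.mp hc'c.not_nil
    have hqpath : q.IsPath ∧ s(m, w) ∉ q.edges := by
      rw [hq] at hc'c
      exact (SimpleGraph.Walk.cons_isCycle_iff _ _).mp hc'c
    have hqlen : 2 ≤ q.length := by
      have h3l := hc'c.three_le_length
      rw [hq, SimpleGraph.Walk.length_cons] at h3l
      omega
    have hqrnil : ¬ q.reverse.Nil := by
      rw [SimpleGraph.Walk.not_nil_iff_lt_length, SimpleGraph.Walk.length_reverse]
      omega
    obtain ⟨x, hadj2, q2, hq2⟩ := SimpleGraph.Walk.not_nil_iff.mp hqrnil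
    -- w and x are both in the support of c'
    have hwsupp : w ∈ c'.support := by
      rw [hq, SimpleGraph.Walk.support_cons]
      exact List.mem_cons_of_mem _ q.start_mem_support
    have hxsupp : x ∈ c'.support := by
      have : x ∈ q.reverse.support := by
        rw [hq2, SimpleGraph.Walk.support_cons]
        exact List.mem_cons_of_mem _ q2.start_mem_support
      rw [SimpleGraph.Walk.support_reverse, List.mem_reverse] at this
      rw [hq, SimpleGraph.Walk.support_cons]
      exact List.mem_cons_of_mem _ this
    -- w ≠ x
    have hwx : w ≠ x := by
      intro hwe
      have hq2path : q2.IsPath := by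
        have := hqpath.1.reverse
        rw [hq2] at this
        exact (SimpleGraph.Walk.cons_isPath_iff _ _).mp this |>.1
      subst hwe
      have : q2 = SimpleGraph.Walk.nil := (SimpleGraph.Walk.isPath_iff_eq_nil (p := q2)).mp hq2path
      have hl : q.reverse.length = 1 := by
        rw [hq2, SimpleGraph.Walk.length_cons, this]
        rfl
      rw [SimpleGraph.Walk.length_reverse] at hl
      omega
    -- m is a maximal subball of both w and x
    have hkey : ∀ y : BallVertex X, (ballGraph X).Adj m y →
        Metric.diam m.1 ≤ Metric.diam y.1 → IsMaxSubball m.1 y.1 := by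
      intro y hadj hle
      rcases hadj with h | h
      · exact h
      · exact absurd (diam_lt_of_ssubset (vertex_ball y) (vertex_ball m) h.2.1)
          (not_lt.mpr hle)
    have hmw : IsMaxSubball m.1 w.1 := hkey w hadj1 (hsupp w hwsupp)
    have hmx : IsMaxSubball m.1 x.1 := hkey x hadj2 (hsupp x hxsupp)
    exact hwx (Subtype.ext (parent_unique (vertex_ball w) (vertex_ball x) hmw hmx))
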